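/- Let J, Δ, γ be real numbers with J_eff := √(Δ² + 4J²) > 0, and let A := A_H + A_L be the real 3×3 matrix with A_H := [[0, Δ, 0],[−Δ, 0, −2J],[0, 2J, 0]] and A_L := (−γ/J_eff²)·[[Δ², 0, 2ΔJ],[0, J_eff², 0],[2ΔJ, 0, 4J²]]. Then for all t ∈ ℝ, the transfer fidelity F_u(t) := (1/2)·(1 − (exp(t·A)·e₃)₃), where exp is the matrix exponential, e₃ = (0,0,1) and (·)₃ denotes the third component, satisfies F_u(t) = (2J²/J_eff²)·(1 − e^{−γt}·cos(J_eff·t)). -/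

import Mathlib

open Matrix Complex

lemma exp_map_ofReal_aux (M : Matrix (Fin 3) (Fin 3) ℝ) :
    (NormedSpace.exp M).map (Complex.ofReal) =
      NormedSpace.exp (M.map Complex.ofReal) := by
  letI : SeminormedRing (Matrix (Fin 3) (Fin 3) ℝ) := Matrix.linftyOpSemiNormedRing
  letI : NormedRing (Matrix (Fin 3) (Fin 3) ℝ) := Matrix.linftyOpNormedRing
  letI : NormedAlgebra ℝ (Matrix (Fin 3) (Fin 3) ℝ) := Matrix.linftyOpNormedAlgebra
  letI : SeminormedRing (Matrix (Fin 3) (Fin 3) ℂ) := Matrix.linftyOpSemiNormedRing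
  letI : NormedRing (Matrix (Fin 3) (Fin 3) ℂ) := Matrix.linftyOpNormedRing
  letI : NormedAlgebra ℝ (Matrix (Fin 3) (Fin 3) ℂ) := Matrix.linftyOpNormedAlgebra
  letI : NormedAlgebra ℚ (Matrix (Fin 3) (Fin 3) ℝ) := Matrix.linftyOpNormedAlgebra
  letI : NormedAlgebra ℚ (Matrix (Fin 3) (Fin 3) ℂ) := Matrix.linftyOpNormedAlgebra
  have hc : Continuous ((Complex.ofRealHom.mapMatrix :
      Matrix (Fin 3) (Fin 3) ℝ →+* Matrix (Fin 3) (Fin 3) ℂ)) := by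
    show Continuous fun M : Matrix (Fin 3) (Fin 3) ℝ => M.map Complex.ofReal
    exact continuous_id.matrix_map Complex.continuous_ofReal
  exact NormedSpace.map_exp Complex.ofRealHom.mapMatrix hc M

set_option maxHeartbeats 2000000 in
/-- Analytic formula for the transfer fidelity of two coupled qubits:
with `r(0) = (0,0,1)`, `F_u(t) = ½(1 − (exp(tA)r(0))₃) = (2J²/J_eff²)(1 − e^{−γt}cos(J_eff t))`. -/
theorem transfer_fidelity_formula
    (J Δ γ Jeff : ℝ)
    (hJeff : Jeff = Real.sqrt (Δ ^ 2 + 4 * J ^ 2)) (hpos : 0 < Jeff)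
    (AH AL : Matrix (Fin 3) (Fin 3) ℝ)
    (hAH : AH = !![0, Δ, 0; -Δ, 0, -2 * J; 0, 2 * J, 0])
    (hAL : AL = (-γ / Jeff ^ 2) •
      !![Δ ^ 2, 0, 2 * Δ * J; 0, Jeff ^ 2, 0; 2 * Δ * J, 0, 4 * J ^ 2]) :
    ∀ t : ℝ,
      (1 / 2) * (1 - (NormedSpace.exp (t • (AH + AL))).mulVec ![0, 0, 1] 2)
        = (2 * J ^ 2 / Jeff ^ 2) * (1 - Real.exp (-γ * t) * Real.cos (Jeff * t)) := by
  intro t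
  have hJ0 : Jeff ≠ 0 := ne_of_gt hpos
  have hE2 : Jeff ^ 2 = Δ ^ 2 + 4 * J ^ 2 := by
    rw [hJeff, Real.sq_sqrt (by positivity)]
  have hJ0' : (Jeff : ℂ) ≠ 0 := by exact_mod_cast hJ0
  have hE2' : (Jeff : ℂ) ^ 2 = (Δ : ℂ) ^ 2 + 4 * (J : ℂ) ^ 2 := by
    exact_mod_cast congrArg (Complex.ofReal) hE2
  set U : Matrix (Fin 3) (Fin 3) ℂ :=
    !![(Δ:ℂ), (Δ:ℂ), 2*(J:ℂ); (Jeff:ℂ)*I, -((Jeff:ℂ)*I), 0;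
       2*(J:ℂ), 2*(J:ℂ), -(Δ:ℂ)] with hU
  set V : Matrix (Fin 3) (Fin 3) ℂ :=
    !![(Δ:ℂ)/(2*(Jeff:ℂ)^2), -(I/(2*(Jeff:ℂ))), (J:ℂ)/(Jeff:ℂ)^2;
       (Δ:ℂ)/(2*(Jeff:ℂ)^2), I/(2*(Jeff:ℂ)), (J:ℂ)/(Jeff:ℂ)^2;
       2*(J:ℂ)/(Jeff:ℂ)^2, 0, -((Δ:ℂ)/(Jeff:ℂ)^2)] with hV
  set d : Fin 3 → ℂ :=
    ![(t:ℂ)*(-(γ:ℂ) + (Jeff:ℂ)*I), (t:ℂ)*(-(γ:ℂ) - (Jeff:ℂ)*I), 0] with hd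
  have hUV : U * V = 1 := by
    ext i j
    fin_cases i <;> fin_cases j <;>
      simp [hU, hV, Matrix.mul_apply, Fin.sum_univ_three] <;>
      field_simp
    · linear_combination (-2 : ℂ) * hE2'
    · ring
    · linear_combination (-2 : ℂ) * Complex.I_sq
    · ring
    · linear_combination (-1 : ℂ) * hE2'
  have hVU : V * U = 1 := mul_eq_one_comm.mp hUV
  have hUnit : IsUnit U := ⟨⟨U, V, hUV, hVU⟩, rfl⟩
  have hUinv : U⁻¹ = V := Matrix.inv_eq_right_inv hUV
  have hdiag : ∀ v : Fin 3 → ℂ, Matrix.diagonal v = !![v 0,0,0;0,v 1,0;0,0,v 2] := by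
    intro v; ext i j; fin_cases i <;> fin_cases j <;> simp [Matrix.vecHead, Matrix.vecTail]
  have hconj : (t • (AH + AL)).map Complex.ofReal = U * Matrix.diagonal d * V := by
    subst hAH hAL
    rw [hdiag]
    ext i j
    fin_cases i <;> fin_cases j <;>
      simp [hU, hV, hd, Matrix.mul_apply, Fin.sum_univ_three, Matrix.map_apply] <;>
      push_cast <;>
      field_simp
    · ring
    · linear_combination (2*(Δ:ℂ)*(Jeff:ℂ)*(t:ℂ)) * Complex.I_sq
    · ring
    · linear_combination (-2*(Δ:ℂ)*(Jeff:ℂ)*(t:ℂ)) * Complex.I_sq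
    · linear_combination (-2*(γ:ℂ)*(t:ℂ)) * Complex.I_sq
    · linear_combination (-2*(J:ℂ)*(Jeff:ℂ)*(t:ℂ)) * Complex.I_sq
    · ring
    · linear_combination (2*(J:ℂ)*(Jeff:ℂ)*(t:ℂ)) * Complex.I_sq
    · ring
  have hexp : (NormedSpace.exp (t • (AH + AL))).map Complex.ofReal
      = U * Matrix.diagonal (fun i => Complex.exp (d i)) * V := by
    have hde : NormedSpace.exp d = fun i => Complex.exp (d i) := by
      funext i
      rw [congrFun (Pi.exp_def d) i,
        ← Complex.exp_eq_exp_ℂ]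
    rw [exp_map_ofReal_aux, hconj, ← hUinv, Matrix.exp_conj U _ hUnit,
      Matrix.exp_diagonal, hUinv, hde]
  have h22 : ((NormedSpace.exp (t • (AH + AL))) 2 2 : ℂ)
      = (U * Matrix.diagonal (fun i => Complex.exp (d i)) * V) 2 2 := by
    rw [← hexp]; rfl
  have h0 : d 0 = ((-γ * t : ℝ) : ℂ) + ((Jeff * t : ℝ) : ℂ) * I := by
    simp [hd]; push_cast; ring
  have h1 : d 1 = ((-γ * t : ℝ) : ℂ) + ((-(Jeff * t) : ℝ) : ℂ) * I := by
    simp [hd]; push_cast; ring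
  have he0 : Complex.exp (d 0) = ((Real.exp (-γ * t) : ℝ) : ℂ)
      * (((Real.cos (Jeff * t) : ℝ) : ℂ) + ((Real.sin (Jeff * t) : ℝ) : ℂ) * I) := by
    rw [h0, Complex.exp_add, Complex.exp_mul_I, ← Complex.ofReal_exp,
      ← Complex.ofReal_cos, ← Complex.ofReal_sin]
  have he1 : Complex.exp (d 1) = ((Real.exp (-γ * t) : ℝ) : ℂ)
      * (((Real.cos (Jeff * t) : ℝ) : ℂ) - ((Real.sin (Jeff * t) : ℝ) : ℂ) * I) := by
    rw [h1, Complex.exp_add, Complex.exp_mul_I, ← Complex.ofReal_exp,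
      ← Complex.ofReal_cos, ← Complex.ofReal_sin, Real.cos_neg, Real.sin_neg]
    push_cast
    ring
  have hz : (NormedSpace.exp (t • (AH + AL))) 2 2
      = Δ ^ 2 / Jeff ^ 2
        + 4 * J ^ 2 / Jeff ^ 2 * (Real.exp (-γ * t) * Real.cos (Jeff * t)) := by
    have : ((NormedSpace.exp (t • (AH + AL))) 2 2 : ℂ)
        = ((Δ ^ 2 / Jeff ^ 2
          + 4 * J ^ 2 / Jeff ^ 2 * (Real.exp (-γ * t) * Real.cos (Jeff * t)) : ℝ) : ℂ) := by
      have e2 : Complex.exp (d 2) = 1 := by simp [hd]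
      rw [h22, hdiag]
      simp [hU, hV, Matrix.mul_apply, Fin.sum_univ_three, e2, he0, he1]
      push_cast
      ring
    exact_mod_cast this
  have hmv : (NormedSpace.exp (t • (AH + AL))).mulVec ![0, 0, 1] 2
      = (NormedSpace.exp (t • (AH + AL))) 2 2 := by
    simp [Matrix.mulVec, dotProduct, Fin.sum_univ_three]
  rw [hmv, hz]
  field_simp
  linear_combination (1 : ℝ) * hE2
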